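/- Let λ > 0, let n, q, d ≥ 1, let X⁰ ∈ ℝ^{n×d} be the unpoisoned design matrix and Z ∈ ℝ^{q×d} the matrix of poisoning samples, and let X ∈ ℝ^{(n+q)×d} be the matrix obtained by stacking X⁰ on top of Z. Let y⁰ ∈ [0,1]^n and y^p ∈ [0,1]^q be the unpoisoned and poisoned response vectors, let y ∈ ℝ^{n+q} be their concatenation, and let ŷ = (∑_{i=1}^n y⁰_i + ∑_{k=1}^q y^p_k)/(n+q) be the mean response. Let σ denote the smallest singular value of X⁰ and assume σ ≥ √λ. Then the ridge regression weight vector θ̃ = (XᵀX + λI)⁻¹ Xᵀ (y − ŷ·1_{n+q}) satisfies, for every coordinate i, |θ̃_i| ≤ (σ/(σ² + λ)) · ( ‖y⁰‖₂ + √q + (∑_{i=1}^n y⁰_i + q)/√(n+q) ). -/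

import Mathlib

open Matrix

/-- The smallest eigenvalue of a real symmetric matrix, characterized as the
infimum of the Rayleigh quotient `vᵀ M v` over the unit sphere `‖v‖₂ = 1`. -/
noncomputable def smallestEig {d : ℕ} (M : Matrix (Fin d) (Fin d) ℝ) : ℝ :=
  sInf {r : ℝ | ∃ v : Fin d → ℝ, (∑ i, (v i) ^ 2) = 1 ∧ r = v ⬝ᵥ M.mulVec v}

lemma rayleigh_eq {m : Type*} [Fintype m] {d : ℕ} (X0 : Matrix m (Fin d) ℝ) (v : Fin d → ℝ) :
    v ⬝ᵥ (X0ᵀ * X0).mulVec v = ∑ j, (X0.mulVec v j) ^ 2 := by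
  rw [← Matrix.mulVec_mulVec, Matrix.dotProduct_mulVec, Matrix.vecMul_transpose]
  simp [dotProduct, sq]

lemma cs_sum {ι : Type*} [Fintype ι] (a b : ι → ℝ) :
    ∑ i, a i * b i ≤ Real.sqrt (∑ i, a i ^ 2) * Real.sqrt (∑ i, b i ^ 2) := by
  have ha : 0 ≤ ∑ i, a i ^ 2 := Finset.sum_nonneg fun i _ => sq_nonneg _
  calc ∑ i, a i * b i ≤ |∑ i, a i * b i| := le_abs_self _
    _ = Real.sqrt ((∑ i, a i * b i) ^ 2) := (Real.sqrt_sq_eq_abs _).symm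
    _ ≤ Real.sqrt ((∑ i, a i ^ 2) * ∑ i, b i ^ 2) :=
        Real.sqrt_le_sqrt (Finset.sum_mul_sq_le_sq_mul_sq Finset.univ a b)
    _ = _ := Real.sqrt_mul ha _

lemma minkowski_sum {ι : Type*} [Fintype ι] (a b : ι → ℝ) :
    Real.sqrt (∑ i, (a i + b i) ^ 2) ≤
      Real.sqrt (∑ i, a i ^ 2) + Real.sqrt (∑ i, b i ^ 2) := by
  have ha : 0 ≤ ∑ i, a i ^ 2 := Finset.sum_nonneg fun i _ => sq_nonneg _
  have hb : 0 ≤ ∑ i, b i ^ 2 := Finset.sum_nonneg fun i _ => sq_nonneg _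
  have hcs := cs_sum a b
  have hexp : ∑ i, (a i + b i) ^ 2 =
      (∑ i, a i ^ 2) + 2 * (∑ i, a i * b i) + (∑ i, b i ^ 2) := by
    rw [Finset.mul_sum, ← Finset.sum_add_distrib, ← Finset.sum_add_distrib]
    exact Finset.sum_congr rfl fun i _ => by ring
  have key : ∑ i, (a i + b i) ^ 2 ≤
      (Real.sqrt (∑ i, a i ^ 2) + Real.sqrt (∑ i, b i ^ 2)) ^ 2 := by
    rw [hexp]
    nlinarith [Real.sq_sqrt ha, Real.sq_sqrt hb, Real.sqrt_nonneg (∑ i, a i ^ 2),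
      Real.sqrt_nonneg (∑ i, b i ^ 2)]
  calc Real.sqrt (∑ i, (a i + b i) ^ 2)
      ≤ Real.sqrt ((Real.sqrt (∑ i, a i ^ 2) + Real.sqrt (∑ i, b i ^ 2)) ^ 2) :=
        Real.sqrt_le_sqrt key
    _ = _ := Real.sqrt_sq (by positivity)

lemma scalar_key {σ lam s t R : ℝ} (hσ : 0 < σ) (hlam : 0 < lam) (hs : 0 ≤ s)
    (hR : 0 ≤ R) (hts : σ * s ≤ t) (hsl : lam ≤ σ ^ 2)
    (h : t ^ 2 + lam * s ^ 2 ≤ t * R) : (σ ^ 2 + lam) * s ≤ σ * R := by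
  rcases eq_or_lt_of_le hs with h0 | hspos
  · rw [← h0, mul_zero]; positivity
  have ht : 0 < t := lt_of_lt_of_le (mul_pos hσ hspos) hts
  have h1 : 0 ≤ t - σ * s := sub_nonneg.2 hts
  have h2 : 0 ≤ σ * t - lam * s := by nlinarith
  nlinarith [mul_nonneg h1 h2]

lemma smallestEig_mul_le {m : Type*} [Fintype m] {d : ℕ} (X0 : Matrix m (Fin d) ℝ)
    (u : Fin d → ℝ) :
    smallestEig (X0ᵀ * X0) * (∑ i, u i ^ 2) ≤ ∑ j, (X0.mulVec u j) ^ 2 := by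
  have hbdd : BddBelow {r : ℝ | ∃ v : Fin d → ℝ,
      (∑ i, (v i) ^ 2) = 1 ∧ r = v ⬝ᵥ (X0ᵀ * X0).mulVec v} := by
    refine ⟨0, fun r hr => ?_⟩
    obtain ⟨v, hv, rfl⟩ := hr
    rw [rayleigh_eq]
    positivity
  have hT : 0 ≤ ∑ j, (X0.mulVec u j) ^ 2 := Finset.sum_nonneg fun j _ => sq_nonneg _
  by_cases hu : (∑ i, u i ^ 2) = 0
  · rw [hu, mul_zero]; exact hT
  have hupos : 0 < ∑ i, u i ^ 2 :=
    lt_of_le_of_ne (Finset.sum_nonneg fun i _ => sq_nonneg _) (Ne.symm hu)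
  set c : ℝ := (Real.sqrt (∑ i, u i ^ 2))⁻¹ with hc
  have hc2 : c ^ 2 = (∑ i, u i ^ 2)⁻¹ := by
    rw [hc, inv_pow, Real.sq_sqrt hupos.le]
  have hv1 : (∑ i, ((c • u) i) ^ 2) = 1 := by
    simp only [Pi.smul_apply, smul_eq_mul, mul_pow]
    rw [← Finset.mul_sum, hc2, inv_mul_cancel₀ hu]
  have hle : smallestEig (X0ᵀ * X0) ≤ (c • u) ⬝ᵥ (X0ᵀ * X0).mulVec (c • u) :=
    csInf_le hbdd ⟨c • u, hv1, rfl⟩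
  rw [rayleigh_eq] at hle
  have hmv : ∀ j, X0.mulVec (c • u) j = c * X0.mulVec u j := by
    intro j; rw [Matrix.mulVec_smul]; rfl
  have hle2 : smallestEig (X0ᵀ * X0) ≤ (∑ i, u i ^ 2)⁻¹ * ∑ j, (X0.mulVec u j) ^ 2 := by
    calc smallestEig (X0ᵀ * X0) ≤ ∑ j, (X0.mulVec (c • u) j) ^ 2 := hle
      _ = (∑ i, u i ^ 2)⁻¹ * ∑ j, (X0.mulVec u j) ^ 2 := by
          simp_rw [hmv, mul_pow]
          rw [← Finset.mul_sum, hc2]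
  calc smallestEig (X0ᵀ * X0) * (∑ i, u i ^ 2)
      ≤ ((∑ i, u i ^ 2)⁻¹ * ∑ j, (X0.mulVec u j) ^ 2) * (∑ i, u i ^ 2) :=
        mul_le_mul_of_nonneg_right hle2 hupos.le
    _ = ∑ j, (X0.mulVec u j) ^ 2 := by field_simp

lemma smallestEig_nonneg {m : Type*} [Fintype m] {d : ℕ} (hd : 1 ≤ d)
    (X0 : Matrix m (Fin d) ℝ) : 0 ≤ smallestEig (X0ᵀ * X0) := by
  have i0 : Fin d := ⟨0, hd⟩
  refine le_csInf ⟨Pi.single i0 1 ⬝ᵥ (X0ᵀ * X0).mulVec (Pi.single i0 1),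
    Pi.single i0 1, ?_, rfl⟩ ?_
  · simp [Pi.single_apply, sq, Finset.sum_ite_eq']
  · rintro r ⟨v, hv, rfl⟩
    rw [rayleigh_eq]
    positivity


/-- coordinatewise bound on the ridge regression weight vector
fitted on poisoned data, in terms of the smallest singular value `σ` of the
unpoisoned design matrix `X⁰` (the square root of the smallest eigenvalue of
`X⁰ᵀX⁰`), assuming `σ ≥ √λ`. -/
theorem ridge_weights_poisoning_bound (lam : ℝ) (hlam : 0 < lam)
    (n q d : ℕ) (hn : 1 ≤ n) (hq : 1 ≤ q) (hd : 1 ≤ d)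
    (X0 : Matrix (Fin n) (Fin d) ℝ) (Z : Matrix (Fin q) (Fin d) ℝ)
    (X : Matrix (Fin n ⊕ Fin q) (Fin d) ℝ) (hX : X = Matrix.fromRows X0 Z)
    (y0 : Fin n → ℝ) (hy0 : ∀ i, y0 i ∈ Set.Icc (0 : ℝ) 1)
    (yp : Fin q → ℝ) (hyp : ∀ k, yp k ∈ Set.Icc (0 : ℝ) 1)
    (y : Fin n ⊕ Fin q → ℝ) (hy : y = Sum.elim y0 yp)
    (ybar : ℝ) (hybar : ybar = (∑ i, y0 i + ∑ k, yp k) / ((n : ℝ) + q))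
    (σ : ℝ) (hσdef : σ = Real.sqrt (smallestEig (X0ᵀ * X0)))
    (hσ : Real.sqrt lam ≤ σ)
    (θ : Fin d → ℝ)
    (hθ : θ = (Xᵀ * X + lam • (1 : Matrix (Fin d) (Fin d) ℝ))⁻¹.mulVec
      (Xᵀ.mulVec (y - Function.const (Fin n ⊕ Fin q) ybar))) :
    ∀ i, |θ i| ≤ (σ / (σ ^ 2 + lam)) *
      (Real.sqrt (∑ i, (y0 i) ^ 2) + Real.sqrt q +
        (∑ i, y0 i + q) / Real.sqrt ((n : ℝ) + q)) := by
  intro i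
  set r : Fin n ⊕ Fin q → ℝ := y - Function.const (Fin n ⊕ Fin q) ybar with hr
  set A : Matrix (Fin d) (Fin d) ℝ := Xᵀ * X + lam • 1 with hA
  -- positive definiteness and invertibility of A
  have h1 : (Xᵀ * X).PosSemidef := by
    have := Matrix.posSemidef_conjTranspose_mul_self X
    rwa [Matrix.conjTranspose_eq_transpose_of_trivial] at this
  have h2 : (lam • (1 : Matrix (Fin d) (Fin d) ℝ)).PosDef := by
    exact Matrix.PosDef.one.smul hlam
  have hApd : A.PosDef := Matrix.PosDef.posSemidef_add h1 h2
  have hdet : IsUnit A.det := (Matrix.isUnit_iff_isUnit_det A).mp hApd.isUnit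
  have hAinv : A * A⁻¹ = 1 := Matrix.mul_nonsing_inv A hdet
  have hAθ : A.mulVec θ = Xᵀ.mulVec r := by
    rw [hθ, Matrix.mulVec_mulVec, hAinv, Matrix.one_mulVec]
  -- key identity
  have hkey : (∑ j, (X.mulVec θ j) ^ 2) + lam * (∑ k, θ k ^ 2)
      = ∑ j, X.mulVec θ j * r j := by
    have lhs : θ ⬝ᵥ A.mulVec θ
        = (∑ j, (X.mulVec θ j) ^ 2) + lam * (∑ k, θ k ^ 2) := by
      rw [hA, Matrix.add_mulVec, dotProduct_add, rayleigh_eq,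
        Matrix.smul_mulVec, Matrix.one_mulVec, dotProduct_smul, smul_eq_mul]
      simp [dotProduct, sq]
    have rhs : θ ⬝ᵥ A.mulVec θ = ∑ j, X.mulVec θ j * r j := by
      rw [hAθ, Matrix.dotProduct_mulVec, Matrix.vecMul_transpose]
      rfl
    rw [← lhs, rhs]
  set T2 : ℝ := ∑ j, (X.mulVec θ j) ^ 2 with hT2
  set S2 : ℝ := ∑ k, θ k ^ 2 with hS2
  set R2 : ℝ := ∑ j, r j ^ 2 with hR2
  have hT2n : 0 ≤ T2 := Finset.sum_nonneg fun j _ => sq_nonneg _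
  have hS2n : 0 ≤ S2 := Finset.sum_nonneg fun k _ => sq_nonneg _
  have hR2n : 0 ≤ R2 := Finset.sum_nonneg fun j _ => sq_nonneg _
  have hmain : T2 + lam * S2 ≤ Real.sqrt T2 * Real.sqrt R2 := by
    rw [hkey]; exact cs_sum _ _
  -- eigenvalue lower bound
  have hσ2 : σ ^ 2 = smallestEig (X0ᵀ * X0) := by
    rw [hσdef, Real.sq_sqrt (smallestEig_nonneg hd X0)]
  have hσpos : 0 < σ := lt_of_lt_of_le (Real.sqrt_pos.mpr hlam) hσ
  have hsl : lam ≤ σ ^ 2 := by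
    have := pow_le_pow_left₀ (Real.sqrt_nonneg lam) hσ 2
    rwa [Real.sq_sqrt hlam.le] at this
  have hlow : σ ^ 2 * S2 ≤ T2 := by
    have hsplit : T2 = (∑ j, (X0.mulVec θ j) ^ 2) + (∑ j, (Z.mulVec θ j) ^ 2) := by
      rw [hT2, hX]
      rw [Fintype.sum_sum_type]
      congr 1 <;> exact Finset.sum_congr rfl fun j _ => by
        rw [Matrix.fromRows_mulVec] <;> rfl
    have := smallestEig_mul_le X0 θ
    rw [← hσ2] at this
    have hZ : 0 ≤ ∑ j, (Z.mulVec θ j) ^ 2 := Finset.sum_nonneg fun j _ => sq_nonneg _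
    rw [hsplit]
    linarith
  have hts : σ * Real.sqrt S2 ≤ Real.sqrt T2 := by
    have h := Real.sqrt_le_sqrt hlow
    rwa [Real.sqrt_mul (sq_nonneg σ), Real.sqrt_sq hσpos.le] at h
  have hkey2 : (σ ^ 2 + lam) * Real.sqrt S2 ≤ σ * Real.sqrt R2 := by
    refine scalar_key hσpos hlam (Real.sqrt_nonneg _) (Real.sqrt_nonneg _) hts hsl ?_
    rw [Real.sq_sqrt hT2n, Real.sq_sqrt hS2n]
    exact hmain
  have hθnorm : Real.sqrt S2 ≤ (σ / (σ ^ 2 + lam)) * Real.sqrt R2 := by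
    have hpos : 0 < σ ^ 2 + lam := by positivity
    rw [div_mul_eq_mul_div, le_div_iff₀ hpos, mul_comm (Real.sqrt S2)]
    linarith [hkey2]
  -- bound on ‖r‖
  have hcard : ((n : ℝ) + q) ≠ 0 := by positivity
  have hsqrtnq : (0:ℝ) < Real.sqrt ((n : ℝ) + q) := Real.sqrt_pos.mpr (by positivity)
  have hy0n : 0 ≤ ∑ i, y0 i := Finset.sum_nonneg fun i _ => (hy0 i).1
  have hypn : 0 ≤ ∑ k, yp k := Finset.sum_nonneg fun k _ => (hyp k).1
  have hypq : ∑ k, yp k ≤ q := by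
    calc ∑ k, yp k ≤ ∑ _k : Fin q, (1:ℝ) := Finset.sum_le_sum fun k _ => (hyp k).2
      _ = q := by simp
  have hybarn : 0 ≤ ybar := by
    rw [hybar]; positivity
  set a : Fin n ⊕ Fin q → ℝ := Sum.elim y0 0 with ha
  set b : Fin n ⊕ Fin q → ℝ := Sum.elim 0 yp with hb
  set c : Fin n ⊕ Fin q → ℝ := fun _ => -ybar with hc
  have hrdecomp : ∀ j, r j = a j + (b j + c j) := by
    intro j
    cases j <;> simp [hr, hy, ha, hb, hc, Function.const, sub_eq_add_neg]
  have hra : Real.sqrt (∑ j, a j ^ 2) = Real.sqrt (∑ i, (y0 i) ^ 2) := by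
    congr 1
    rw [Fintype.sum_sum_type]
    simp [ha]
  have hrb : Real.sqrt (∑ j, b j ^ 2) ≤ Real.sqrt q := by
    apply Real.sqrt_le_sqrt
    rw [Fintype.sum_sum_type]
    simp only [hb, Sum.elim_inl, Sum.elim_inr, Pi.zero_apply]
    have : ∑ k, (yp k) ^ 2 ≤ ∑ _k : Fin q, (1:ℝ) := by
      refine Finset.sum_le_sum fun k _ => ?_
      have h1 := (hyp k).1; have h2 := (hyp k).2
      nlinarith
    simpa using this
  have hrc : Real.sqrt (∑ j, c j ^ 2) ≤ (∑ i, y0 i + q) / Real.sqrt ((n : ℝ) + q) := by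
    have hcsum : (∑ j : Fin n ⊕ Fin q, c j ^ 2) = ((n : ℝ) + q) * ybar ^ 2 := by
      simp [hc, Finset.sum_const, Fintype.card_sum, neg_sq]
    rw [hcsum, Real.sqrt_mul (by positivity), Real.sqrt_sq hybarn, hybar]
    have hms := Real.mul_self_sqrt (show (0:ℝ) ≤ (n:ℝ) + q by positivity)
    have heq : Real.sqrt ((n:ℝ) + q) * ((∑ i, y0 i + ∑ k, yp k) / ((n:ℝ) + q))
        = (∑ i, y0 i + ∑ k, yp k) / Real.sqrt ((n:ℝ) + q) := by
      rw [eq_div_iff hsqrtnq.ne']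
      calc Real.sqrt ((n:ℝ) + q) * ((∑ i, y0 i + ∑ k, yp k) / ((n:ℝ) + q)) *
            Real.sqrt ((n:ℝ) + q)
          = (Real.sqrt ((n:ℝ) + q) * Real.sqrt ((n:ℝ) + q)) *
            ((∑ i, y0 i + ∑ k, yp k) / ((n:ℝ) + q)) := by ring
        _ = ((n:ℝ) + q) * ((∑ i, y0 i + ∑ k, yp k) / ((n:ℝ) + q)) := by rw [hms]
        _ = ∑ i, y0 i + ∑ k, yp k := mul_div_cancel₀ _ hcard
    rw [heq]
    exact (div_le_div_iff_of_pos_right hsqrtnq).mpr (by linarith)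
  have hRbound : Real.sqrt R2 ≤ Real.sqrt (∑ i, (y0 i) ^ 2) + Real.sqrt q +
      (∑ i, y0 i + q) / Real.sqrt ((n : ℝ) + q) := by
    have h1' : Real.sqrt R2 = Real.sqrt (∑ j, (a j + (b j + c j)) ^ 2) := by
      rw [hR2]
      congr 1
      exact Finset.sum_congr rfl fun j _ => by rw [hrdecomp j]
    have h2' := minkowski_sum a (fun j => b j + c j)
    have h3' := minkowski_sum b c
    rw [h1']
    calc Real.sqrt (∑ j, (a j + (b j + c j)) ^ 2)
        ≤ Real.sqrt (∑ j, a j ^ 2) + Real.sqrt (∑ j, (b j + c j) ^ 2) := h2'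
      _ ≤ Real.sqrt (∑ j, a j ^ 2) +
          (Real.sqrt (∑ j, b j ^ 2) + Real.sqrt (∑ j, c j ^ 2)) := by linarith
      _ ≤ _ := by rw [hra]; linarith [hrb, hrc]
  have habs : |θ i| ≤ Real.sqrt S2 := by
    have h := Finset.single_le_sum (f := fun k => θ k ^ 2)
      (fun k _ => sq_nonneg _) (Finset.mem_univ i)
    calc |θ i| = Real.sqrt (θ i ^ 2) := (Real.sqrt_sq_eq_abs _).symm
      _ ≤ Real.sqrt S2 := Real.sqrt_le_sqrt h
  have hcoef : 0 ≤ σ / (σ ^ 2 + lam) := by positivity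
  calc |θ i| ≤ Real.sqrt S2 := habs
    _ ≤ (σ / (σ ^ 2 + lam)) * Real.sqrt R2 := hθnorm
    _ ≤ _ := mul_le_mul_of_nonneg_left hRbound hcoef
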